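/- Let k be a field, let S be an integral domain that is a k-algebra, let Q be an ideal of S, and set R = k + Q. If R ≠ S, then the conductor of the extension R ⊆ S equals Q; that is, {a ∈ S : a·S ⊆ R} = Q. -/
import Mathlib


/-- For an ideal `Q` of a commutative `k`-algebra `S`, the subalgebra `k + Q` of `S`,
consisting of all elements of the form `c • 1 + q` with `c ∈ k`, `q ∈ Q`. -/
def kPlus (k : Type*) {S : Type*} [CommRing k] [CommRing S] [Algebra k S]
    (Q : Ideal S) : Subalgebra k S where
  carrier := {s : S | ∃ c : k, s - algebraMap k S c ∈ Q}
  add_mem' := by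
    rintro a b ⟨c, hc⟩ ⟨d, hd⟩
    exact ⟨c + d, by rw [map_add]; convert Q.add_mem hc hd using 1; ring⟩
  mul_mem' := by
    rintro a b ⟨c, hc⟩ ⟨d, hd⟩
    refine ⟨c * d, ?_⟩
    have : a * b - algebraMap k S (c * d)
        = a * (b - algebraMap k S d) + algebraMap k S d * (a - algebraMap k S c) := by
      rw [map_mul]; ring
    rw [this]
    exact Q.add_mem (Q.mul_mem_left _ hd) (Q.mul_mem_left _ hc)
  algebraMap_mem' := fun c => ⟨c, by simp⟩

set_option synthInstance.maxHeartbeats 1000000 in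
/-- Let `k` be a field, `S` a domain which is a `k`-algebra, `Q` an ideal
of `S`, and `R = k + Q`.  If `R ≠ S`, then the conductor of the extension `R ⊆ S` equals
`Q`; that is, `{a ∈ S : a·S ⊆ R} = Q`. -/
theorem kPlus_conductor_eq (k : Type*) [Field k]
    (S : Type*) [CommRing S] [IsDomain S] [Algebra k S]
    (Q : Ideal S) (hRS : kPlus k Q ≠ ⊤) :
    {a : S | ∀ s : S, a * s ∈ kPlus k Q} = (Q : Set S) := by
  ext a
  simp only [Set.mem_setOf_eq, SetLike.mem_coe]
  constructor
  · intro h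
    obtain ⟨c, hc⟩ := h 1
    rw [mul_one] at hc
    by_cases hc0 : c = 0
    · simpa [hc0] using hc
    · exfalso
      apply hRS
      rw [eq_top_iff]
      intro s _
      have hmem : ∀ t : S, algebraMap k S c * t ∈ kPlus k Q := by
        intro t
        have h1 := h t
        have h2 : (a - algebraMap k S c) * t ∈ Q := Q.mul_mem_right t hc
        have h3 : ((a - algebraMap k S c) * t : S) ∈ kPlus k Q := ⟨0, by simpa using h2⟩
        have := (kPlus k Q).sub_mem h1 h3
        convert this using 1; ring
      have h4 : algebraMap k S c⁻¹ ∈ kPlus k Q := (kPlus k Q).algebraMap_mem _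
      have h5 := (kPlus k Q).mul_mem h4 (hmem s)
      have : algebraMap k S c⁻¹ * (algebraMap k S c * s) = s := by
        rw [← mul_assoc, ← map_mul, inv_mul_cancel₀ hc0, map_one, one_mul]
      rwa [this] at h5
  · intro hq s
    exact ⟨0, by simpa using Q.mul_mem_right s hq⟩
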